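/- arXiv:1402.1298 — 3 statements merged into one kernel-verified Lean document; each statement's English description precedes it below -/
import Mathlib

section
/- The V-derivative of the log local partition function: fix y ∈ ℝ and define Z(ω,V) = (2πV)^{-1/2} ∫ p(y,z) e^{-(z-ω)²/(2V)} dz for ω ∈ ℝ, V > 0. Assume 0 < ∫ p(y,z) e^{-(z-ω)²/(2V)} dz < ∞ and ∫ (1 + |z| + z²) p(y,z) e^{-(z-ω)²/(2V)} dz < ∞ for all ω and V > 0, with local domination in (ω,V) justifying differentiation under the integral sign. Then ∂/∂V log Z(ω,V) = ½ ( g_out(ω,y,V)² + ∂_ω g_out(ω,y,V) ) for all ω ∈ ℝ and V > 0. -/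
open MeasureTheory

/-- The output function `g_out(ω, y, V)` of a generalized-linear output channel with
density `p(y,z)`. -/
noncomputable def gout (p : ℝ → ℝ → ℝ) (ω y V : ℝ) : ℝ :=
  (∫ z, (z - ω) * p y z * Real.exp (-(z - ω) ^ 2 / (2 * V))) /
    (V * ∫ z, p y z * Real.exp (-(z - ω) ^ 2 / (2 * V)))

/-- The `V`-derivative of the log local partition function
`Z(ω,V) = (2πV)^{-1/2} ∫ p(y,z) e^{-(z-ω)²/(2V)} dz`:
`∂_V log Z(ω,V) = ½ (g_out(ω,y,V)² + ∂_ω g_out(ω,y,V))`. -/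
theorem deriv_V_log_Z (p : ℝ → ℝ → ℝ) (hp : Measurable (Function.uncurry p))
    (hpnn : ∀ y z, 0 ≤ p y z) (y : ℝ)
    (hZpos : ∀ (ω V : ℝ), 0 < V → 0 < ∫ z, p y z * Real.exp (-(z - ω) ^ 2 / (2 * V)))
    (hmom : ∀ (ω V : ℝ), 0 < V →
      Integrable (fun z => (1 + |z| + z ^ 2) * (p y z * Real.exp (-(z - ω) ^ 2 / (2 * V)))))
    (hDUIden : ∀ (ω V : ℝ), 0 < V →
      HasDerivAt (fun w => ∫ z, p y z * Real.exp (-(z - w) ^ 2 / (2 * V)))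
        (∫ z, p y z * Real.exp (-(z - ω) ^ 2 / (2 * V)) * ((z - ω) / V)) ω)
    (hDUInum : ∀ (ω V : ℝ), 0 < V →
      HasDerivAt (fun w => ∫ z, (z - w) * p y z * Real.exp (-(z - w) ^ 2 / (2 * V)))
        (∫ z, p y z * Real.exp (-(z - ω) ^ 2 / (2 * V)) * ((z - ω) ^ 2 / V - 1)) ω)
    (hDUIV : ∀ (ω V : ℝ), 0 < V →
      HasDerivAt (fun v => ∫ z, p y z * Real.exp (-(z - ω) ^ 2 / (2 * v)))
        (∫ z, p y z * Real.exp (-(z - ω) ^ 2 / (2 * V)) * ((z - ω) ^ 2 / (2 * V ^ 2))) V) :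
    ∀ (ω V : ℝ), 0 < V →
      HasDerivAt
        (fun v => Real.log
          ((Real.sqrt (2 * Real.pi * v))⁻¹ * ∫ z, p y z * Real.exp (-(z - ω) ^ 2 / (2 * v))))
        ((1 / 2) * ((gout p ω y V) ^ 2 + deriv (fun w => gout p w y V) ω)) V := by
  intro ω V hV
  have hVne : V ≠ 0 := ne_of_gt hV
  -- basic integrands
  set e : ℝ → ℝ := fun z => Real.exp (-(z - ω) ^ 2 / (2 * V)) with he
  have hepos : ∀ z, 0 < e z := fun z => Real.exp_pos _
  have hmeasp : Measurable (fun z => p y z) := hp.comp measurable_prodMk_left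
  have hmeas : Measurable (fun z => p y z * e z) := by
    apply hmeasp.mul
    exact (Real.measurable_exp.comp (by fun_prop))
  have hmomV := hmom ω V hV
  have hint0 : Integrable (fun z => p y z * e z) := by
    refine hmomV.mono' hmeas.aestronglyMeasurable ?_
    filter_upwards with z
    simp only [he]
    have h1 : 0 ≤ p y z * Real.exp (-(z - ω) ^ 2 / (2 * V)) :=
      mul_nonneg (hpnn y z) (Real.exp_pos _).le
    rw [Real.norm_eq_abs, abs_of_nonneg h1]
    nlinarith [abs_nonneg z, sq_nonneg z]
  have hint1 : Integrable (fun z => (z - ω) * p y z * e z) := by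
    refine ((hmomV.const_mul (1 + |ω|)).mono' ?_ ?_)
    · exact (((measurable_id.sub_const ω).mul hmeasp).mul
        (Real.measurable_exp.comp (by fun_prop))).aestronglyMeasurable
    · filter_upwards with z
      simp only [he]
      have h1 : 0 ≤ p y z * Real.exp (-(z - ω) ^ 2 / (2 * V)) :=
        mul_nonneg (hpnn y z) (Real.exp_pos _).le
      rw [Real.norm_eq_abs, abs_mul, abs_mul, abs_of_nonneg (hpnn y z),
        abs_of_nonneg (Real.exp_pos _).le]
      have h2 : |z - ω| ≤ |z| + |ω| := abs_sub z ω
      have h3 : |z - ω| ≤ (1 + |ω|) * (1 + |z| + z ^ 2) := by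
        nlinarith [abs_nonneg z, abs_nonneg ω, sq_nonneg z, sq_abs z]
      calc |z - ω| * p y z * Real.exp (-(z - ω) ^ 2 / (2 * V))
          ≤ ((1 + |ω|) * (1 + |z| + z ^ 2)) * (p y z * Real.exp (-(z - ω) ^ 2 / (2 * V))) := by
            rw [mul_assoc]; exact mul_le_mul_of_nonneg_right h3 h1
        _ = (1 + |ω|) * ((1 + |z| + z ^ 2) * (p y z * Real.exp (-(z - ω) ^ 2 / (2 * V)))) := by
            ring
  have hint2 : Integrable (fun z => (z - ω) ^ 2 * (p y z * e z)) := by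
    refine ((hmomV.const_mul (2 + 2 * ω ^ 2)).mono' ?_ ?_)
    · exact (((measurable_id.sub_const ω).pow_const 2).mul hmeas).aestronglyMeasurable
    · filter_upwards with z
      simp only [he]
      have h1 : 0 ≤ p y z * Real.exp (-(z - ω) ^ 2 / (2 * V)) :=
        mul_nonneg (hpnn y z) (Real.exp_pos _).le
      rw [Real.norm_eq_abs, abs_mul, abs_of_nonneg (sq_nonneg (z - ω)), abs_of_nonneg h1]
      have h2 : (z - ω) ^ 2 ≤ (2 + 2 * ω ^ 2) * (1 + |z| + z ^ 2) := by
        nlinarith [sq_nonneg (z + ω), abs_nonneg z, sq_abs z, sq_nonneg ω, sq_nonneg (|z| - 1)]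
      calc (z - ω) ^ 2 * (p y z * Real.exp (-(z - ω) ^ 2 / (2 * V)))
          ≤ ((2 + 2 * ω ^ 2) * (1 + |z| + z ^ 2)) * (p y z * Real.exp (-(z - ω) ^ 2 / (2 * V))) :=
            mul_le_mul_of_nonneg_right h2 h1
        _ = (2 + 2 * ω ^ 2) * ((1 + |z| + z ^ 2) * (p y z * Real.exp (-(z - ω) ^ 2 / (2 * V)))) := by
            ring
  set I0 : ℝ := ∫ z, p y z * e z with hI0
  set I1 : ℝ := ∫ z, (z - ω) * p y z * e z with hI1
  set I2 : ℝ := ∫ z, (z - ω) ^ 2 * (p y z * e z) with hI2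
  have hI0pos : 0 < I0 := hZpos ω V hV
  have hI0ne : I0 ≠ 0 := ne_of_gt hI0pos
  -- rewrite the derivative values
  have hden : HasDerivAt (fun w => ∫ z, p y z * Real.exp (-(z - w) ^ 2 / (2 * V)))
      (V⁻¹ * I1) ω := by
    have h := hDUIden ω V hV
    have : (∫ z, p y z * Real.exp (-(z - ω) ^ 2 / (2 * V)) * ((z - ω) / V))
        = V⁻¹ * I1 := by
      rw [hI1, ← integral_const_mul]
      congr 1; funext z; rw [he]; ring
    rwa [this] at h
  have hnum : HasDerivAt (fun w => ∫ z, (z - w) * p y z * Real.exp (-(z - w) ^ 2 / (2 * V)))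
      (V⁻¹ * I2 - I0) ω := by
    have h := hDUInum ω V hV
    have : (∫ z, p y z * Real.exp (-(z - ω) ^ 2 / (2 * V)) * ((z - ω) ^ 2 / V - 1))
        = V⁻¹ * I2 - I0 := by
      have heq : (fun z => p y z * Real.exp (-(z - ω) ^ 2 / (2 * V)) * ((z - ω) ^ 2 / V - 1))
          = fun z => V⁻¹ * ((z - ω) ^ 2 * (p y z * e z)) - p y z * e z := by
        funext z; rw [he]; ring
      rw [heq, integral_sub (hint2.const_mul _) hint0, integral_const_mul, ← hI2, ← hI0]
    rwa [this] at h
  have hder0 : HasDerivAt (fun v => ∫ z, p y z * Real.exp (-(z - ω) ^ 2 / (2 * v)))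
      ((2 * V ^ 2)⁻¹ * I2) V := by
    have h := hDUIV ω V hV
    have : (∫ z, p y z * Real.exp (-(z - ω) ^ 2 / (2 * V)) * ((z - ω) ^ 2 / (2 * V ^ 2)))
        = (2 * V ^ 2)⁻¹ * I2 := by
      rw [hI2, ← integral_const_mul]
      congr 1; funext z; rw [he]; ring
    rwa [this] at h
  -- derivative of gout in ω
  have hVI0ne : V * I0 ≠ 0 := mul_ne_zero hVne hI0ne
  have hgout : HasDerivAt (fun w => gout p w y V)
      (((V⁻¹ * I2 - I0) * (V * I0) - I1 * (V * (V⁻¹ * I1))) / (V * I0) ^ 2) ω := by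
    have hd : HasDerivAt (fun w => V * ∫ z, p y z * Real.exp (-(z - w) ^ 2 / (2 * V)))
        (V * (V⁻¹ * I1)) ω := hden.const_mul V
    exact hnum.div hd hVI0ne
  have hderiv : deriv (fun w => gout p w y V) ω
      = ((V⁻¹ * I2 - I0) * (V * I0) - I1 * (V * (V⁻¹ * I1))) / (V * I0) ^ 2 :=
    hgout.deriv
  -- derivative of the alternate form of the log partition function
  have h2piV : (0:ℝ) < 2 * Real.pi * V := by positivity
  have hlogI0 : HasDerivAt (fun v => Real.log (∫ z, p y z * Real.exp (-(z - ω) ^ 2 / (2 * v))))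
      ((2 * V ^ 2)⁻¹ * I2 / I0) V := hder0.log hI0ne
  have hlin : HasDerivAt (fun v : ℝ => 2 * Real.pi * v) (2 * Real.pi) V := by
    simpa using (hasDerivAt_id V).const_mul (2 * Real.pi)
  have hlog2 : HasDerivAt (fun v : ℝ => Real.log (2 * Real.pi * v) / 2)
      (2 * Real.pi / (2 * Real.pi * V) / 2) V := (hlin.log (ne_of_gt h2piV)).div_const 2
  have hsum := hlogI0.sub hlog2
  have heq : (fun v => Real.log
      ((Real.sqrt (2 * Real.pi * v))⁻¹ * ∫ z, p y z * Real.exp (-(z - ω) ^ 2 / (2 * v))))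
      =ᶠ[nhds V] (fun v => Real.log (∫ z, p y z * Real.exp (-(z - ω) ^ 2 / (2 * v)))
        - Real.log (2 * Real.pi * v) / 2) := by
    filter_upwards [eventually_gt_nhds hV] with v hv
    have h2piv : (0:ℝ) < 2 * Real.pi * v := by positivity
    have hsv : (0:ℝ) < Real.sqrt (2 * Real.pi * v) := Real.sqrt_pos.mpr h2piv
    have hZv : 0 < ∫ z, p y z * Real.exp (-(z - ω) ^ 2 / (2 * v)) := hZpos ω v hv
    rw [Real.log_mul (by positivity) (ne_of_gt hZv), Real.log_inv,
      Real.log_sqrt h2piv.le]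
    ring
  have hmain := hsum.congr_of_eventuallyEq heq
  refine hmain.congr_deriv ?_
  have hgoutval : gout p ω y V = I1 / (V * I0) := rfl
  rw [hgoutval, hderiv]
  have hpi : Real.pi ≠ 0 := Real.pi_ne_zero
  field_simp
  ring
end

section
/- Zero-mean property of the output function under the correct data distribution: fix ω ∈ ℝ and V > 0. Assume that for every z ∈ ℝ, ∫ p(y,z) dy = 1 (each p(·,z) is a probability density), and let q(y) = ∫ p(y,z) φ_V(z-ω) dz be the marginal density of the data, where φ_V(u) = (2πV)^{-1/2} e^{-u²/(2V)}. Assume q(y) ∈ (0,∞) for every y. Then y ↦ g_out(ω, y, V) q(y) is integrable and ∫ g_out(ω, y, V) q(y) dy = 0; that is, the expectation of g_out(ω, Y, V) vanishes when Y is drawn from the true marginal q. -/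
open MeasureTheory

lemma odd_gauss_int {b : ℝ} (hb : 0 < b) :
    ∫ u : ℝ, u * Real.exp (-u ^ 2 / (2 * b)) = 0 := by
  have h := MeasureTheory.integral_neg_eq_self
    (fun u : ℝ => u * Real.exp (-u ^ 2 / (2 * b))) (volume : Measure ℝ)
  have h2 : ∫ u : ℝ, (-u) * Real.exp (-(-u) ^ 2 / (2 * b))
      = -∫ u : ℝ, u * Real.exp (-u ^ 2 / (2 * b)) := by
    rw [← integral_neg]
    congr 1 with u
    ring_nf
  rw [h2] at h
  linarith

lemma gauss_mul_int {b : ℝ} (hb : 0 < b) :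
    Integrable (fun u : ℝ => |u| * Real.exp (-u ^ 2 / (2 * b))) := by
  have h := (integrable_mul_exp_neg_mul_sq (b := (2 * b)⁻¹) (by positivity)).abs
  refine h.congr ?_
  filter_upwards with u
  rw [abs_mul, Real.abs_exp]
  congr 2
  field_simp

/-- Zero-mean property of the output function under the correct data distribution: if each
`p(·,z)` is a probability density and `q(y) = ∫ p(y,z) φ_V(z-ω) dz` is the marginal density
of the data (assumed positive and finite), then `y ↦ g_out(ω,y,V) q(y)` is integrable and
`∫ g_out(ω, y, V) q(y) dy = 0`. -/
theorem gout_zero_mean (p : ℝ → ℝ → ℝ) (hp : Measurable (Function.uncurry p))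
    (hpnn : ∀ y z, 0 ≤ p y z) (ω V : ℝ) (hV : 0 < V)
    (hchan_int : ∀ z : ℝ, Integrable (fun y => p y z))
    (hchan : ∀ z : ℝ, ∫ y, p y z = 1)
    (q : ℝ → ℝ)
    (hq : ∀ y, q y = ∫ z, p y z *
        ((Real.sqrt (2 * Real.pi * V))⁻¹ * Real.exp (-(z - ω) ^ 2 / (2 * V))))
    (hq_fin : ∀ y : ℝ, Integrable (fun z => p y z *
        ((Real.sqrt (2 * Real.pi * V))⁻¹ * Real.exp (-(z - ω) ^ 2 / (2 * V)))))
    (hq_pos : ∀ y, 0 < q y) :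
    Integrable (fun y => gout p ω y V * q y) ∧ ∫ y, gout p ω y V * q y = 0 := by
  set c : ℝ := (Real.sqrt (2 * Real.pi * V))⁻¹ with hc
  have hc_pos : 0 < c := by
    have : 0 < Real.sqrt (2 * Real.pi * V) :=
      Real.sqrt_pos.mpr (by positivity)
    positivity
  set G : ℝ → ℝ := fun z => Real.exp (-(z - ω) ^ 2 / (2 * V)) with hGdef
  have hG_pos : ∀ z, 0 < G z := fun z => Real.exp_pos _
  -- the product-space integrand
  set F : ℝ × ℝ → ℝ := fun w => (w.2 - ω) * p w.1 w.2 * G w.2 with hFdef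
  have hF_meas : Measurable F := by
    apply Measurable.mul
    · exact ((measurable_snd.sub measurable_const).mul hp)
    · exact (Real.measurable_exp.comp
        ((((measurable_snd.sub measurable_const).pow measurable_const).neg).div
          measurable_const))
  -- integrability of |u| G(u+ω) type function
  have hzG_int : Integrable (fun z : ℝ => |z - ω| * G z) := by
    have := (gauss_mul_int hV).comp_sub_right ω
    exact this
  -- integrability of F on the product
  have hF_int : Integrable F ((volume : Measure ℝ).prod volume) := by
    rw [integrable_prod_iff' hF_meas.aestronglyMeasurable]
    constructor
    · filter_upwards with z
      have h := (hchan_int z).const_mul ((z - ω) * G z)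
      refine h.congr ?_
      filter_upwards with y
      simp only [F]
      ring
    · refine hzG_int.congr ?_
      filter_upwards with z
      have h1 : ∀ y, ‖F (y, z)‖ = (|z - ω| * G z) * p y z := by
        intro y
        simp only [F, norm_mul, Real.norm_eq_abs]
        rw [abs_of_nonneg (hpnn y z), abs_of_pos (hG_pos z)]
        ring
      simp only [h1]
      rw [integral_const_mul, hchan z, mul_one]
  -- the numerator as a function of y
  set N : ℝ → ℝ := fun y => ∫ z, (z - ω) * p y z * G z with hNdef
  have hN_int : Integrable N := by
    have := hF_int.integral_prod_left
    exact this
  -- q y = c * D y with D y positive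
  have hqD : ∀ y, q y = c * ∫ z, p y z * G z := by
    intro y
    rw [hq y, ← integral_const_mul]
    congr 1 with z
    ring
  have hD_pos : ∀ y, 0 < ∫ z, p y z * G z := by
    intro y
    have := hq_pos y
    rw [hqD y] at this
    nlinarith [this, hc_pos]
  -- pointwise identity
  have hpt : ∀ y, gout p ω y V * q y = (c / V) * N y := by
    intro y
    have hD := hD_pos y
    rw [hqD y]
    show (∫ z, (z - ω) * p y z * G z) / (V * ∫ z, p y z * G z) *
        (c * ∫ z, p y z * G z) = (c / V) * N y
    rw [hNdef]
    field_simp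
  constructor
  · refine ((hN_int.const_mul (c / V)).congr ?_)
    filter_upwards with y
    exact (hpt y).symm
  · calc ∫ y, gout p ω y V * q y = ∫ y, (c / V) * N y := by
          congr 1 with y; exact hpt y
      _ = (c / V) * ∫ y, N y := integral_const_mul _ _
      _ = 0 := by
          have hswap : ∫ y, N y = ∫ z, ∫ y, (z - ω) * p y z * G z := by
            exact integral_integral_swap (by exact hF_int)
          rw [hswap]
          have h1 : ∀ z : ℝ, (∫ y, (z - ω) * p y z * G z) = (z - ω) * G z := by
            intro z
            have : (fun y => (z - ω) * p y z * G z)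
                = fun y => ((z - ω) * G z) * p y z := by funext y; ring
            rw [this, integral_const_mul, hchan z, mul_one]
          simp only [h1]
          have h2 : ∫ z, (z - ω) * G z = ∫ u : ℝ, u * Real.exp (-u ^ 2 / (2 * V)) := by
            exact integral_sub_right_eq_self (fun u => u * Real.exp (-u ^ 2 / (2 * V))) ω
          rw [h2, odd_gauss_int hV, mul_zero]
end

section
/- Output Nishimori condition: fix ω ∈ ℝ and V > 0. Assume that for every z ∈ ℝ, ∫ p(y,z) dy = 1, let q(y) = ∫ p(y,z) φ_V(z-ω) dz where φ_V(u) = (2πV)^{-1/2} e^{-u²/(2V)}, and assume q(y) ∈ (0,∞) for every y. Assume moreover that for every y, ∫ (1 + |z| + z²) p(y,z) e^{-(z-ω')²/(2V)} dz < ∞ for all ω' with local domination in ω' justifying differentiation under the integral sign (so that ∂_ω g_out exists and the posterior second-moment identity holds). Then ∫ (−∂_ω g_out(ω, y, V)) q(y) dy = ∫ g_out(ω, y, V)² q(y) dy; that is, under the true data distribution the expectation of −∂_ω g_out equals the expectation of g_out². -/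
open MeasureTheory

section AuxLemmas
open Real Filter

lemma aux_sq_exp {b : ℝ} (hb : 0 < b) :
    Integrable fun u : ℝ => u ^ 2 * Real.exp (-b * u ^ 2) := by
  apply Integrable.mono' ((integrable_exp_neg_mul_sq (half_pos hb)).const_mul (2 / b))
  · exact ((measurable_id.pow_const 2).mul
      (((measurable_id.pow_const 2).const_mul (-b)).exp)).aestronglyMeasurable
  · filter_upwards with u
    rw [Real.norm_eq_abs, abs_of_nonneg (by positivity)]
    have h2 : u ^ 2 ≤ (2 / b) * Real.exp (b / 2 * u ^ 2) :=
      calc u ^ 2 = (2 / b) * (b / 2 * u ^ 2) := by field_simp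
        _ ≤ (2 / b) * Real.exp (b / 2 * u ^ 2) := by
            apply mul_le_mul_of_nonneg_left _ (by positivity)
            linarith [Real.add_one_le_exp (b / 2 * u ^ 2)]
    calc u ^ 2 * Real.exp (-b * u ^ 2)
        ≤ (2 / b) * Real.exp (b / 2 * u ^ 2) * Real.exp (-b * u ^ 2) :=
          mul_le_mul_of_nonneg_right h2 (Real.exp_pos _).le
      _ = 2 / b * Real.exp (-(b / 2) * u ^ 2) := by
          rw [mul_assoc, ← Real.exp_add]; congr 2; ring

lemma aux_exp_int {V : ℝ} (hV : 0 < V) :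
    Integrable fun u : ℝ => Real.exp (-u ^ 2 / (2 * V)) := by
  have h : (fun u : ℝ => Real.exp (-u ^ 2 / (2 * V)))
      = fun u : ℝ => Real.exp (-(1 / (2 * V)) * u ^ 2) := by
    funext u; congr 1; field_simp
  rw [h]; exact integrable_exp_neg_mul_sq (by positivity)

lemma aux_poly_int {V : ℝ} (hV : 0 < V) :
    Integrable fun u : ℝ => Real.exp (-u ^ 2 / (2 * V)) * (u ^ 2 / V - 1) := by
  have hb : Integrable fun u : ℝ =>
      (u ^ 2 * Real.exp (-u ^ 2 / (2 * V))) / V + Real.exp (-u ^ 2 / (2 * V)) := by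
    apply Integrable.add _ (aux_exp_int hV)
    apply Integrable.div_const
    have h : (fun u : ℝ => u ^ 2 * Real.exp (-u ^ 2 / (2 * V)))
        = fun u : ℝ => u ^ 2 * Real.exp (-(1 / (2 * V)) * u ^ 2) := by
      funext u; congr 2; field_simp
    rw [h]; exact aux_sq_exp (by positivity)
  apply Integrable.mono' hb
  · apply Continuous.aestronglyMeasurable; continuity
  · filter_upwards with u
    rw [Real.norm_eq_abs, abs_mul, abs_of_nonneg (Real.exp_pos _).le]
    have h0 : (0:ℝ) ≤ u ^ 2 / V := by positivity
    have h1 : |u ^ 2 / V - 1| ≤ u ^ 2 / V + 1 := by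
      rw [abs_le]; constructor <;> linarith
    calc Real.exp (-u ^ 2 / (2 * V)) * |u ^ 2 / V - 1|
        ≤ Real.exp (-u ^ 2 / (2 * V)) * (u ^ 2 / V + 1) :=
          mul_le_mul_of_nonneg_left h1 (Real.exp_pos _).le
      _ = (u ^ 2 * Real.exp (-u ^ 2 / (2 * V))) / V + Real.exp (-u ^ 2 / (2 * V)) := by ring

lemma aux_gauss_zero {V : ℝ} (hV : 0 < V) :
    ∫ u : ℝ, Real.exp (-u ^ 2 / (2 * V)) * (u ^ 2 / V - 1) = 0 := by
  have hV0 : V ≠ 0 := hV.ne'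
  set g : ℝ → ℝ := fun u => -u * Real.exp (-u ^ 2 / (2 * V)) with hg_def
  set g' : ℝ → ℝ := fun u => Real.exp (-u ^ 2 / (2 * V)) * (u ^ 2 / V - 1) with hg'_def
  have hderiv : ∀ u : ℝ, HasDerivAt g (g' u) u := by
    intro u
    have h1 : HasDerivAt (fun u : ℝ => -u ^ 2 / (2 * V)) (-(2 * u ^ 1) / (2 * V)) u :=
      ((hasDerivAt_pow 2 u).neg).div_const (2 * V)
    have h3 := ((hasDerivAt_id u).neg).mul h1.exp
    refine (show HasDerivAt g _ u from h3).congr_deriv ?_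
    simp only [pow_one, hg'_def, id_eq, Pi.neg_apply]
    field_simp
    ring
  have hint : Integrable g' := aux_poly_int hV
  have key : Tendsto (fun u : ℝ => u * Real.exp (-u ^ 2 / (2 * V))) atTop (nhds 0) := by
    apply squeeze_zero' (g := fun u : ℝ => 2 * V / u)
    · filter_upwards [eventually_ge_atTop (0 : ℝ)] with u hu
      exact mul_nonneg hu (Real.exp_pos _).le
    · filter_upwards [eventually_ge_atTop (1 : ℝ)] with u hu
      have hu0 : (0 : ℝ) < u := by linarith
      have hX : (0 : ℝ) < u ^ 2 / (2 * V) := by positivity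
      have h1 : u ^ 2 / (2 * V) ≤ Real.exp (u ^ 2 / (2 * V)) := by
        linarith [Real.add_one_le_exp (u ^ 2 / (2 * V))]
      have h2 : Real.exp (-u ^ 2 / (2 * V)) ≤ 2 * V / u ^ 2 := by
        rw [neg_div, Real.exp_neg]
        calc (Real.exp (u ^ 2 / (2 * V)))⁻¹ ≤ (u ^ 2 / (2 * V))⁻¹ :=
              inv_anti₀ hX h1
          _ = 2 * V / u ^ 2 := by rw [inv_div]
      calc u * Real.exp (-u ^ 2 / (2 * V)) ≤ u * (2 * V / u ^ 2) :=
            mul_le_mul_of_nonneg_left h2 hu0.le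
        _ = 2 * V / u := by field_simp
    · exact Tendsto.div_atTop tendsto_const_nhds tendsto_id
  have htop : Tendsto g atTop (nhds 0) := by
    have h := key.neg
    rw [neg_zero] at h
    exact h.congr fun u => by simp [hg_def]
  have hbot : Tendsto g atBot (nhds 0) := by
    have h := (htop.comp tendsto_neg_atBot_atTop).neg
    rw [neg_zero] at h
    exact h.congr fun u => by simp [hg_def]
  have h0 : g 0 = 0 := by simp [hg_def]
  have hIoi : ∫ x in Set.Ioi (0:ℝ), g' x = 0 - g 0 :=
    integral_Ioi_of_hasDerivAt_of_tendsto' (fun x _ => hderiv x) hint.integrableOn htop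
  have hIic : ∫ x in Set.Iic (0:ℝ), g' x = g 0 - 0 :=
    integral_Iic_of_hasDerivAt_of_tendsto (hderiv 0).continuousAt.continuousWithinAt
      (fun x _ => hderiv x) hint.integrableOn hbot
  have hsum := intervalIntegral.integral_Iic_add_Ioi (b := (0:ℝ)) hint.integrableOn hint.integrableOn
  rw [hIic, hIoi, h0] at hsum
  simpa using hsum.symm

end AuxLemmas

/-- Output Nishimori condition: under the true data distribution with marginal density
`q(y) = ∫ p(y,z) φ_V(z-ω) dz`, the expectation of `−∂_ω g_out` equals the expectation of
`g_out²`:  `∫ (−∂_ω g_out(ω,y,V)) q(y) dy = ∫ g_out(ω,y,V)² q(y) dy`. -/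
theorem output_nishimori_condition (p : ℝ → ℝ → ℝ) (hp : Measurable (Function.uncurry p))
    (hpnn : ∀ y z, 0 ≤ p y z) (ω V : ℝ) (hV : 0 < V)
    (hchan_int : ∀ z : ℝ, Integrable (fun y => p y z))
    (hchan : ∀ z : ℝ, ∫ y, p y z = 1)
    (q : ℝ → ℝ)
    (hq : ∀ y, q y = ∫ z, p y z *
        ((Real.sqrt (2 * Real.pi * V))⁻¹ * Real.exp (-(z - ω) ^ 2 / (2 * V))))
    (hq_fin : ∀ y : ℝ, Integrable (fun z => p y z *
        ((Real.sqrt (2 * Real.pi * V))⁻¹ * Real.exp (-(z - ω) ^ 2 / (2 * V)))))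
    (hq_pos : ∀ y, 0 < q y)
    (hmom : ∀ (y ω' : ℝ),
      Integrable (fun z => (1 + |z| + z ^ 2) * (p y z * Real.exp (-(z - ω') ^ 2 / (2 * V)))))
    (hDUIden : ∀ (y ω' : ℝ),
      HasDerivAt (fun w => ∫ z, p y z * Real.exp (-(z - w) ^ 2 / (2 * V)))
        (∫ z, p y z * Real.exp (-(z - ω') ^ 2 / (2 * V)) * ((z - ω') / V)) ω')
    (hDUInum : ∀ (y ω' : ℝ),
      HasDerivAt (fun w => ∫ z, (z - w) * p y z * Real.exp (-(z - w) ^ 2 / (2 * V)))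
        (∫ z, p y z * Real.exp (-(z - ω') ^ 2 / (2 * V)) * ((z - ω') ^ 2 / V - 1)) ω') :
    ∫ y, (-(deriv (fun w => gout p w y V) ω)) * q y
      = ∫ y, (gout p ω y V) ^ 2 * q y := by
  have hV0 : V ≠ 0 := hV.ne'
  set c : ℝ := (Real.sqrt (2 * Real.pi * V))⁻¹ with hc_def
  have hc : 0 < c := by
    rw [hc_def]
    exact inv_pos.mpr (Real.sqrt_pos.mpr (by positivity))
  -- q y = c * D y
  have hqD : ∀ y, q y = c * ∫ z, p y z * Real.exp (-(z - ω) ^ 2 / (2 * V)) := by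
    intro y
    rw [hq y, show (fun z => p y z * (c * Real.exp (-(z - ω) ^ 2 / (2 * V))))
        = fun z => c * (p y z * Real.exp (-(z - ω) ^ 2 / (2 * V))) from
        funext fun z => by ring, integral_const_mul]
  have hD_pos : ∀ y, 0 < ∫ z, p y z * Real.exp (-(z - ω) ^ 2 / (2 * V)) := by
    intro y
    have h := hq_pos y
    rw [hqD y] at h
    by_contra hle
    push_neg at hle
    nlinarith
  -- derivative formula
  have hgoutd : ∀ y, deriv (fun w => gout p w y V) ω
      = (∫ z, p y z * Real.exp (-(z - ω) ^ 2 / (2 * V)) * ((z - ω) ^ 2 / V - 1))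
          / (V * ∫ z, p y z * Real.exp (-(z - ω) ^ 2 / (2 * V)))
        - (∫ z, (z - ω) * p y z * Real.exp (-(z - ω) ^ 2 / (2 * V))) ^ 2
          / (V * ∫ z, p y z * Real.exp (-(z - ω) ^ 2 / (2 * V))) ^ 2 := by
    intro y
    have hDpos := hD_pos y
    have hDne : (V * ∫ z, p y z * Real.exp (-(z - ω) ^ 2 / (2 * V))) ≠ 0 :=
      (mul_pos hV hDpos).ne'
    have hD' : (∫ z, p y z * Real.exp (-(z - ω) ^ 2 / (2 * V)) * ((z - ω) / V))
        = (∫ z, (z - ω) * p y z * Real.exp (-(z - ω) ^ 2 / (2 * V))) / V := by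
      rw [← integral_div]
      congr 1; funext z; ring
    have hVD : HasDerivAt (fun w => V * ∫ z, p y z * Real.exp (-(z - w) ^ 2 / (2 * V)))
        (V * ((∫ z, (z - ω) * p y z * Real.exp (-(z - ω) ^ 2 / (2 * V))) / V)) ω := by
      have h := (hDUIden y ω).const_mul V
      rwa [hD'] at h
    have hdiv := (hDUInum y ω).div hVD hDne
    have hd2 : HasDerivAt
        (fun w => (∫ z, (z - w) * p y z * Real.exp (-(z - w) ^ 2 / (2 * V))) /
          (V * ∫ z, p y z * Real.exp (-(z - w) ^ 2 / (2 * V))))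
        (((∫ z, p y z * Real.exp (-(z - ω) ^ 2 / (2 * V)) * ((z - ω) ^ 2 / V - 1)) *
            (V * ∫ z, p y z * Real.exp (-(z - ω) ^ 2 / (2 * V))) -
          (∫ z, (z - ω) * p y z * Real.exp (-(z - ω) ^ 2 / (2 * V))) *
            (V * ((∫ z, (z - ω) * p y z * Real.exp (-(z - ω) ^ 2 / (2 * V))) / V))) /
          (V * ∫ z, p y z * Real.exp (-(z - ω) ^ 2 / (2 * V))) ^ 2) ω := hdiv
    simp only [gout]
    rw [hd2.deriv]
    set A := ∫ z, p y z * Real.exp (-(z - ω) ^ 2 / (2 * V)) * ((z - ω) ^ 2 / V - 1)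
    set B := ∫ z, (z - ω) * p y z * Real.exp (-(z - ω) ^ 2 / (2 * V))
    set D := ∫ z, p y z * Real.exp (-(z - ω) ^ 2 / (2 * V))
    field_simp
  -- pointwise identity
  have hpoint : ∀ y, (-(deriv (fun w => gout p w y V) ω)) * q y
      = (gout p ω y V) ^ 2 * q y
        + (-(c / V)) *
          ∫ z, p y z * Real.exp (-(z - ω) ^ 2 / (2 * V)) * ((z - ω) ^ 2 / V - 1) := by
    intro y
    have hDpos := hD_pos y
    rw [hgoutd y, hqD y]
    have hg : gout p ω y V = (∫ z, (z - ω) * p y z * Real.exp (-(z - ω) ^ 2 / (2 * V)))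
        / (V * ∫ z, p y z * Real.exp (-(z - ω) ^ 2 / (2 * V))) := rfl
    rw [hg]
    set A := ∫ z, p y z * Real.exp (-(z - ω) ^ 2 / (2 * V)) * ((z - ω) ^ 2 / V - 1)
    set B := ∫ z, (z - ω) * p y z * Real.exp (-(z - ω) ^ 2 / (2 * V))
    set D := ∫ z, p y z * Real.exp (-(z - ω) ^ 2 / (2 * V))
    field_simp
    ring
  -- Fubini part
  set H : ℝ × ℝ → ℝ := fun x => p x.2 x.1 *
      (Real.exp (-(x.1 - ω) ^ 2 / (2 * V)) * ((x.1 - ω) ^ 2 / V - 1)) with hH_def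
  have hφcont : Continuous fun z : ℝ =>
      Real.exp (-(z - ω) ^ 2 / (2 * V)) * ((z - ω) ^ 2 / V - 1) := by
    apply Continuous.mul
    · exact Real.continuous_exp.comp (by fun_prop)
    · fun_prop
  have hHmeas : Measurable H :=
    (hp.comp measurable_swap).mul (hφcont.measurable.comp measurable_fst)
  have hHint : Integrable H (volume.prod volume) := by
    rw [integrable_prod_iff hHmeas.aestronglyMeasurable]
    constructor
    · refine Filter.Eventually.of_forall fun z => ?_
      simp only [hH_def]
      exact (hchan_int z).mul_const _
    · have heq : (fun z : ℝ => ∫ y, ‖H (z, y)‖)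
          = fun z => |Real.exp (-(z - ω) ^ 2 / (2 * V)) * ((z - ω) ^ 2 / V - 1)| := by
        funext z
        have h1 : (fun y => ‖H (z, y)‖) = fun y => p y z *
            |Real.exp (-(z - ω) ^ 2 / (2 * V)) * ((z - ω) ^ 2 / V - 1)| := by
          funext y
          rw [hH_def]
          rw [Real.norm_eq_abs, abs_mul, abs_of_nonneg (hpnn y z)]
        rw [h1, integral_mul_const, hchan z, one_mul]
      rw [heq]
      exact ((aux_poly_int hV).comp_sub_right ω).abs
  have hN'int : Integrable (fun y =>
      ∫ z, p y z * Real.exp (-(z - ω) ^ 2 / (2 * V)) * ((z - ω) ^ 2 / V - 1)) := by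
    have h := hHint.swap.integral_prod_left
    refine h.congr (Filter.Eventually.of_forall fun y => ?_)
    simp only [hH_def, Function.comp_apply, Prod.swap_prod_mk]
    congr 1; funext z; ring
  have hN'zero : (∫ y, ∫ z, p y z * Real.exp (-(z - ω) ^ 2 / (2 * V)) *
      ((z - ω) ^ 2 / V - 1)) = 0 := by
    have hswap := integral_integral_swap (f := fun z y => H (z, y)) hHint
    calc (∫ y, ∫ z, p y z * Real.exp (-(z - ω) ^ 2 / (2 * V)) * ((z - ω) ^ 2 / V - 1))
        = ∫ y, ∫ z, H (z, y) := by
          congr 1; funext y; congr 1; funext z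
          simp only [hH_def]; ring
      _ = ∫ z, ∫ y, H (z, y) := hswap.symm
      _ = ∫ z, Real.exp (-(z - ω) ^ 2 / (2 * V)) * ((z - ω) ^ 2 / V - 1) := by
          congr 1; funext z
          show (∫ y, p y z * (Real.exp (-(z - ω) ^ 2 / (2 * V)) * ((z - ω) ^ 2 / V - 1))) = _
          rw [integral_mul_const, hchan z, one_mul]
      _ = ∫ u : ℝ, Real.exp (-u ^ 2 / (2 * V)) * (u ^ 2 / V - 1) :=
          integral_sub_right_eq_self
            (fun u : ℝ => Real.exp (-u ^ 2 / (2 * V)) * (u ^ 2 / V - 1)) ω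
      _ = 0 := aux_gauss_zero hV
  -- final assembly
  have hfeq : (fun y => (-(deriv (fun w => gout p w y V) ω)) * q y)
      = fun y => (gout p ω y V) ^ 2 * q y + (-(c / V)) *
          ∫ z, p y z * Real.exp (-(z - ω) ^ 2 / (2 * V)) * ((z - ω) ^ 2 / V - 1) :=
    funext hpoint
  rw [hfeq]
  have hfint : Integrable (fun y => (-(c / V)) *
      ∫ z, p y z * Real.exp (-(z - ω) ^ 2 / (2 * V)) * ((z - ω) ^ 2 / V - 1)) :=
    hN'int.const_mul _
  by_cases hB : Integrable (fun y => (gout p ω y V) ^ 2 * q y)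
  · rw [integral_add hB hfint, integral_const_mul, hN'zero, mul_zero, add_zero]
  · have h1 : ¬ Integrable (fun y => (gout p ω y V) ^ 2 * q y + (-(c / V)) *
        ∫ z, p y z * Real.exp (-(z - ω) ^ 2 / (2 * V)) * ((z - ω) ^ 2 / V - 1)) := by
      intro h
      apply hB
      have h2 := h.sub hfint
      refine h2.congr (Filter.Eventually.of_forall fun y => ?_)
      simp [Pi.sub_apply]
    rw [integral_undef h1, integral_undef hB]
end
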